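/- The improper integral ∫₀¹ √(e^{τ²}/(e^{τ²} − e·τ²)) dτ diverges (equals +∞). -/

import Mathlib

open Real MeasureTheory Set

-- pointwise quadratic bound: for τ ∈ (0,1), exp(τ²) - e τ² ≤ 3 e (1-τ)²
lemma aux_quad {τ : ℝ} (h0 : 0 < τ) (h1 : τ < 1) :
    Real.exp (τ ^ 2) - Real.exp 1 * τ ^ 2 ≤ 3 * Real.exp 1 * (1 - τ) ^ 2 := by
  set u : ℝ := τ ^ 2 - 1 with hu
  have hupos : -1 < u := by nlinarith
  have huneg : u < 0 := by nlinarith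
  have habs : |u| ≤ 1 := by rw [abs_le]; constructor <;> nlinarith
  have hb := Real.exp_bound habs (n := 2) (by norm_num)
  have hsum : ∑ i ∈ Finset.range 2, u ^ i / (Nat.factorial i : ℝ) = 1 + u := by
    simp [Finset.sum_range_succ, Nat.factorial]
  rw [hsum] at hb
  have hb2 : Real.exp u ≤ 1 + u + u ^ 2 * (3 / 4) := by
    have h' : Real.exp u - (1 + u) ≤ |u| ^ 2 * ((Nat.succ 2 : ℝ) / ((Nat.factorial 2 : ℝ) * 2)) :=
      le_trans (le_abs_self _) hb
    rw [sq_abs] at h'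
    have : ((Nat.succ 2 : ℝ) / ((Nat.factorial 2 : ℝ) * 2)) = 3 / 4 := by
      norm_num [Nat.factorial]
    rw [this] at h'
    linarith
  have hexp : Real.exp (τ ^ 2) = Real.exp 1 * Real.exp u := by
    rw [← Real.exp_add, hu]; ring_nf
  have he : (0 : ℝ) < Real.exp 1 := Real.exp_pos 1
  have : Real.exp (τ ^ 2) ≤ Real.exp 1 * (1 + u + u ^ 2 * (3 / 4)) := by
    rw [hexp]; exact mul_le_mul_of_nonneg_left hb2 he.le
  have hu2 : u ^ 2 = (1 - τ) ^ 2 * (1 + τ) ^ 2 := by rw [hu]; ring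
  have h4 : (1 + τ) ^ 2 ≤ 4 := by nlinarith
  have hsq : u ^ 2 ≤ 4 * (1 - τ) ^ 2 := by
    rw [hu2]
    nlinarith [sq_nonneg (1 - τ)]
  have h1u : 1 + u = τ ^ 2 := by rw [hu]; ring
  nlinarith [mul_le_mul_of_nonneg_left hsq he.le]

lemma aux_pos {τ : ℝ} (h0 : 0 < τ) (h1 : τ < 1) :
    0 < Real.exp (τ ^ 2) - Real.exp 1 * τ ^ 2 := by
  have hne : τ ^ 2 - 1 ≠ 0 := by nlinarith
  have := Real.add_one_lt_exp hne
  have hexp : Real.exp (τ ^ 2) = Real.exp 1 * Real.exp (τ ^ 2 - 1) := by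
    rw [← Real.exp_add]; ring_nf
  have he : (0 : ℝ) < Real.exp 1 := Real.exp_pos 1
  nlinarith

-- 1/(1-x) not integrable on Ioo 0 1
lemma aux_not_int : ¬ IntegrableOn (fun x : ℝ => (1 - x)⁻¹) (Ioo (0:ℝ) 1) := by
  intro h
  have hinv : ¬ IntegrableOn (fun x : ℝ => x ^ (-1 : ℝ)) (Ioo (0:ℝ) 1) := by
    rw [intervalIntegral.integrableOn_Ioo_rpow_iff zero_lt_one]; norm_num
  apply hinv
  have hmp : MeasurePreserving (fun x : ℝ => 1 - x) volume volume :=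
    MeasureTheory.Measure.measurePreserving_sub_left volume 1
  have hemb : MeasurableEmbedding (fun x : ℝ => 1 - x) :=
    (Homeomorph.subLeft (1:ℝ)).measurableEmbedding
  have hpre : (fun x : ℝ => 1 - x) ⁻¹' (Ioo (0:ℝ) 1) = Ioo (0:ℝ) 1 := by
    ext x; simp only [mem_preimage, mem_Ioo]; constructor <;> intro ⟨a, b⟩ <;> constructor <;> linarith
  have := (hmp.integrableOn_comp_preimage hemb (f := fun x : ℝ => (1 - x)⁻¹)
      (s := Ioo (0:ℝ) 1)).mpr h
  rw [hpre] at this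
  refine this.congr_fun ?_ measurableSet_Ioo
  intro x hx
  simp only [Function.comp_apply]
  rw [Real.rpow_neg_one]
  ring_nf

theorem stmt8 :
    ∫⁻ τ in Set.Ioo (0 : ℝ) 1,
      ENNReal.ofReal
        (Real.sqrt (Real.exp (τ ^ 2) / (Real.exp (τ ^ 2) - Real.exp 1 * τ ^ 2))) = ⊤ := by
  by_contra h
  have hlt : ∫⁻ τ in Set.Ioo (0 : ℝ) 1,
      ENNReal.ofReal
        (Real.sqrt (Real.exp (τ ^ 2) / (Real.exp (τ ^ 2) - Real.exp 1 * τ ^ 2))) < ⊤ :=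
    lt_top_iff_ne_top.mpr h
  set c : ℝ := Real.sqrt (3 * Real.exp 1) with hc
  have hcpos : 0 < c := Real.sqrt_pos.mpr (by positivity)
  -- pointwise bound
  have key : ∀ τ ∈ Ioo (0:ℝ) 1,
      ENNReal.ofReal ((1 - τ)⁻¹) ≤
      ENNReal.ofReal c * ENNReal.ofReal
        (Real.sqrt (Real.exp (τ ^ 2) / (Real.exp (τ ^ 2) - Real.exp 1 * τ ^ 2))) := by
    intro τ ⟨h0, h1⟩
    rw [← ENNReal.ofReal_mul hcpos.le]
    apply ENNReal.ofReal_le_ofReal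
    have hB := aux_pos h0 h1
    have hBle := aux_quad h0 h1
    have hA : (1:ℝ) ≤ Real.exp (τ ^ 2) := by
      have := Real.exp_pos (τ^2); nlinarith [Real.add_one_le_exp (τ^2), sq_nonneg τ]
    have h1τ : (0:ℝ) < 1 - τ := by linarith
    have hratio : (3 * Real.exp 1 * (1 - τ) ^ 2)⁻¹ ≤
        Real.exp (τ ^ 2) / (Real.exp (τ ^ 2) - Real.exp 1 * τ ^ 2) := by
      rw [inv_le_iff_one_le_mul₀ (by positivity), div_mul_eq_mul_div, le_div_iff₀ hB]
      nlinarith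
    have hs := Real.sqrt_le_sqrt hratio
    rw [Real.sqrt_inv] at hs
    have hsq : Real.sqrt (3 * Real.exp 1 * (1 - τ) ^ 2) = c * (1 - τ) := by
      rw [Real.sqrt_mul (by positivity), Real.sqrt_sq h1τ.le, hc]
    rw [hsq] at hs
    have : (1 - τ)⁻¹ = c * (c * (1 - τ))⁻¹ := by
      field_simp
    rw [this]
    exact mul_le_mul_of_nonneg_left hs hcpos.le
  -- integral bound
  have hmono : ∫⁻ τ in Ioo (0:ℝ) 1, ENNReal.ofReal ((1 - τ)⁻¹) ≤
      ∫⁻ τ in Ioo (0:ℝ) 1, ENNReal.ofReal c * ENNReal.ofReal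
        (Real.sqrt (Real.exp (τ ^ 2) / (Real.exp (τ ^ 2) - Real.exp 1 * τ ^ 2))) := by
    apply setLIntegral_mono (by fun_prop) key
  rw [lintegral_const_mul' _ _ ENNReal.ofReal_ne_top] at hmono
  have hfin : ∫⁻ τ in Ioo (0:ℝ) 1, ENNReal.ofReal ((1 - τ)⁻¹) < ⊤ :=
    lt_of_le_of_lt hmono (ENNReal.mul_lt_top ENNReal.ofReal_lt_top hlt)
  apply aux_not_int
  constructor
  · exact ((measurable_const.sub measurable_id).inv).aestronglyMeasurable
  · rw [hasFiniteIntegral_iff_ofReal]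
    · exact hfin
    · filter_upwards [ae_restrict_mem measurableSet_Ioo] with x hx
      have : (0:ℝ) < 1 - x := by linarith [hx.2]
      positivity
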